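/- Let f : ℝⁿ → ℝ be convex, differentiable, and μ-smooth, A an n×d matrix, λ > 0, and S a d×m matrix. Let x* be the minimizer of F(x) = f(Ax) + (λ/2)‖x‖², with dual solution z* = ∇f(Ax*). Let α* minimize α ↦ f(ASα) + (λ/2)‖Sα‖², and define the zero-order estimator x̂⁰ = Sα* and the first-order estimator x̂¹ = -(1/λ)Aᵀ∇f(ASα*). Let Z_f = sup{‖P_S^⊥ Aᵀ Δ‖ : Δ ∈ T_{z*} ∩ B₂ⁿ}, where T_{z*} is the tangent cone of dom f* at z* and P_S^⊥ = I - P_S. If λ ≥ 2μ Z_f², then ‖x̂¹ - x*‖ / ‖x*‖ ≤ √(μ/(2λ)) · Z_f · min{1, ‖x̂⁰ - x*‖ / ‖x*‖} (assuming x* ≠ 0). -/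

import Mathlib

open scoped RealInnerProductSpace
open Matrix MeasureTheory ProbabilityTheory

noncomputable section

abbrev EuclR (n : ℕ) := EuclideanSpace ℝ (Fin n)

def matVec {p q : ℕ} (M : Matrix (Fin p) (Fin q) ℝ) (x : EuclR q) : EuclR p :=
  Matrix.toEuclideanLin M x

def matCLM {p q : ℕ} (M : Matrix (Fin p) (Fin q) ℝ) : EuclR q →L[ℝ] EuclR p :=
  LinearMap.toContinuousLinearMap (Matrix.toEuclideanLin M)

def ranM {p q : ℕ} (M : Matrix (Fin p) (Fin q) ℝ) : Submodule ℝ (EuclR p) :=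
  LinearMap.range (Matrix.toEuclideanLin M)

def projOn {p : ℕ} (K : Submodule ℝ (EuclR p)) (x : EuclR p) : EuclR p :=
  (K.orthogonalProjectionOnto x : EuclR p)

def perpCLM {p : ℕ} (K : Submodule ℝ (EuclR p)) : EuclR p →L[ℝ] EuclR p :=
  ContinuousLinearMap.id ℝ (EuclR p) - K.subtypeL.comp (K.orthogonalProjectionOnto)

def fconj {p : ℕ} (f : EuclR p → ℝ) (z : EuclR p) : EReal :=
  ⨆ w : EuclR p, ((⟪w, z⟫ - f w : ℝ) : EReal)

def fdom {p : ℕ} (f : EuclR p → ℝ) : Set (EuclR p) := {z | fconj f z ≠ ⊤}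

def tcone {p : ℕ} (f : EuclR p → ℝ) (z : EuclR p) : Set (EuclR p) :=
  {Δ | ∃ t : ℝ, 0 ≤ t ∧ ∃ y ∈ fdom f, Δ = t • (y - z)}

def ZfVal {n d m : ℕ} (f : EuclR n → ℝ) (zs : EuclR n)
    (A : Matrix (Fin n) (Fin d) ℝ) (S : Matrix (Fin d) (Fin m) ℝ) : ℝ :=
  sSup ((fun Δ => ‖matVec Aᵀ Δ - projOn (ranM S) (matVec Aᵀ Δ)‖) ''
    (tcone f zs ∩ Metric.closedBall 0 1))

/-! ### Auxiliary lemmas -/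

lemma matVec_adjoint {p q : ℕ} (M : Matrix (Fin p) (Fin q) ℝ) (u : EuclR p) (v : EuclR q) :
    ⟪matVec Mᵀ u, v⟫ = ⟪u, matVec M v⟫ := by
  have h : (Mᵀ : Matrix _ _ ℝ) = Mᴴ := (Matrix.conjTranspose_eq_transpose_of_trivial M).symm
  rw [matVec, matVec, h, Matrix.toEuclideanLin_conjTranspose_eq_adjoint]
  exact LinearMap.adjoint_inner_left _ _ _

lemma matCLM_apply {p q : ℕ} (M : Matrix (Fin p) (Fin q) ℝ) (x : EuclR q) :
    matCLM M x = matVec M x := rfl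

lemma matVec_one {d : ℕ} (x : EuclR d) : matVec (1 : Matrix (Fin d) (Fin d) ℝ) x = x := by
  simp [matVec, Matrix.toEuclideanLin_apply]

lemma matVec_mul {n d m : ℕ} (A : Matrix (Fin n) (Fin d) ℝ) (S : Matrix (Fin d) (Fin m) ℝ)
    (x : EuclR m) : matVec (A * S) x = matVec A (matVec S x) := by
  simp [matVec, Matrix.toEuclideanLin_apply, Matrix.mulVec_mulVec]

lemma matVec_add {p q : ℕ} (M : Matrix (Fin p) (Fin q) ℝ) (x y : EuclR q) :
    matVec M (x + y) = matVec M x + matVec M y := by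
  simp [matVec, map_add]

lemma matVec_sub {p q : ℕ} (M : Matrix (Fin p) (Fin q) ℝ) (x y : EuclR q) :
    matVec M (x - y) = matVec M x - matVec M y := by
  simp [matVec, map_sub]

lemma matVec_smul {p q : ℕ} (M : Matrix (Fin p) (Fin q) ℝ) (c : ℝ) (x : EuclR q) :
    matVec M (c • x) = c • matVec M x := by
  simp [matVec, _root_.map_smul]

section Conv
variable {N : ℕ} {f : EuclR N → ℝ} {g : EuclR N → EuclR N}

lemma chainD (hg : ∀ x, HasGradientAt f (g x) x) (x y : EuclR N) (t : ℝ) :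
    HasDerivAt (fun s : ℝ => f (x + s • (y - x))) ⟪g (x + t • (y - x)), y - x⟫ t := by
  have hc : HasDerivAt (fun s : ℝ => x + s • (y - x)) (y - x) t := by
    simpa using ((hasDerivAt_id t).smul_const (y - x)).const_add x
  have := (hg (x + t • (y - x))).hasFDerivAt.comp_hasDerivAt t hc
  simpa [InnerProductSpace.toDual_apply_apply, Function.comp_def] using this

lemma grad_ineq (hconv : ConvexOn ℝ Set.univ f) (hg : ∀ x, HasGradientAt f (g x) x)
    (x y : EuclR N) : f x + ⟪g x, y - x⟫ ≤ f y := by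
  have hφc : ConvexOn ℝ Set.univ (fun s : ℝ => f (x + s • (y - x))) := by
    have h := hconv.comp_affineMap (AffineMap.lineMap x y : ℝ →ᵃ[ℝ] EuclR N)
    have : (f ∘ (AffineMap.lineMap x y : ℝ →ᵃ[ℝ] EuclR N))
        = fun s : ℝ => f (x + s • (y - x)) := by
      funext s; simp [AffineMap.lineMap_apply, add_comm]
    simpa [this] using h
  have h0 := chainD hg x y 0
  have key := hφc.le_slope_of_hasDerivAt (Set.mem_univ 0) (Set.mem_univ 1) zero_lt_one
    (by simpa using h0)
  rw [slope_def_field] at key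
  simp only [zero_smul, add_zero, one_smul] at key ⊢
  have h1 : x + (y - x) = y := by abel
  rw [h1] at key
  simp only [div_one, sub_zero] at key
  have h2 : ⟪g x, y - x⟫ = ∑ i, g x i * (y i - x i) := by
    simp [PiLp.inner_apply, RCLike.inner_apply, mul_comm]
  rw [h2]; linarith [key]

open intervalIntegral in
lemma descent {μ : ℝ} (hμ : 0 < μ) (hg : ∀ x, HasGradientAt f (g x) x)
    (hsmooth : ∀ u v, ‖g v - g u‖ ≤ μ * ‖v - u‖) (x y : EuclR N) :
    f y ≤ f x + ⟪g x, y - x⟫ + μ / 2 * ‖y - x‖ ^ 2 := by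
  set c : ℝ → EuclR N := fun t => x + t • (y - x) with hc
  set φ' : ℝ → ℝ := fun t => ⟪g (c t), y - x⟫ with hφ'
  have hgl : LipschitzWith (Real.toNNReal μ) g := by
    apply LipschitzWith.of_dist_le_mul
    intro a b
    rw [dist_eq_norm, dist_eq_norm]
    simpa [Real.coe_toNNReal _ hμ.le] using hsmooth b a
  have hccont : Continuous c := by fun_prop
  have hcont : Continuous φ' := (hgl.continuous.comp hccont).inner continuous_const
  have hd : ∀ t ∈ Set.uIcc (0:ℝ) 1, HasDerivAt (fun s : ℝ => f (c s)) (φ' t) t :=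
    fun t _ => chainD hg x y t
  have hint : IntervalIntegrable φ' MeasureTheory.volume 0 1 :=
    hcont.intervalIntegrable _ _
  have heq : ∫ t in (0:ℝ)..1, φ' t = f (c 1) - f (c 0) :=
    intervalIntegral.integral_eq_sub_of_hasDerivAt hd hint
  set ψ : ℝ → ℝ := fun t => ⟪g x, y - x⟫ + (μ * ‖y - x‖ ^ 2) * t with hψ
  have hψcont : Continuous ψ := by fun_prop
  have hmono : ∀ t ∈ Set.Icc (0:ℝ) 1, φ' t ≤ ψ t := by
    intro t ht
    have h1 : φ' t - ⟪g x, y - x⟫ = ⟪g (c t) - g x, y - x⟫ := by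
      rw [inner_sub_left]
    have h2 : ⟪g (c t) - g x, y - x⟫ ≤ ‖g (c t) - g x‖ * ‖y - x‖ :=
      real_inner_le_norm _ _
    have h3 : ‖g (c t) - g x‖ ≤ μ * (t * ‖y - x‖) := by
      have := hsmooth x (c t)
      have hct : c t - x = t • (y - x) := by simp [hc]
      rw [hct, norm_smul] at this
      simpa [abs_of_nonneg ht.1] using this
    have h4 : ‖g (c t) - g x‖ * ‖y - x‖ ≤ μ * (t * ‖y - x‖) * ‖y - x‖ :=
      mul_le_mul_of_nonneg_right h3 (norm_nonneg _)
    have : φ' t - ⟪g x, y - x⟫ ≤ μ * ‖y - x‖ ^ 2 * t := by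
      rw [h1]; nlinarith [h2, h4]
    simp only [hψ]; linarith
  have hle : ∫ t in (0:ℝ)..1, φ' t ≤ ∫ t in (0:ℝ)..1, ψ t :=
    intervalIntegral.integral_mono_on zero_le_one hint (hψcont.intervalIntegrable _ _) hmono
  have hval : ∫ t in (0:ℝ)..1, ψ t = ⟪g x, y - x⟫ + μ / 2 * ‖y - x‖ ^ 2 := by
    simp only [hψ]
    rw [intervalIntegral.integral_add intervalIntegrable_const
      ((continuous_id'.intervalIntegrable _ _).const_mul _),
      intervalIntegral.integral_const_mul, integral_id]
    simp
    ring
  have hc1 : c 1 = y := by simp [hc]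
  have hc0 : c 0 = x := by simp [hc]
  rw [hc1, hc0] at heq
  linarith [heq ▸ hle, hval ▸ hle]

lemma grad_lower {μ : ℝ} (hμ : 0 < μ) (hconv : ConvexOn ℝ Set.univ f)
    (hg : ∀ x, HasGradientAt f (g x) x)
    (hsmooth : ∀ u v, ‖g v - g u‖ ≤ μ * ‖v - u‖) (x y : EuclR N) :
    1 / (2 * μ) * ‖g y - g x‖ ^ 2 ≤ f y - f x - ⟪g x, y - x⟫ := by
  set Δ : EuclR N := g y - g x with hΔ
  set w : EuclR N := y - (1 / μ) • Δ with hw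
  have h1 := descent hμ hg hsmooth y w
  have h2 := grad_ineq hconv hg x w
  have hwy : w - y = -((1 / μ) • Δ) := by rw [hw]; abel
  have e1 : ⟪g y, w - y⟫ = -(1 / μ * ⟪g y, Δ⟫) := by
    rw [hwy, inner_neg_right, real_inner_smul_right]
  have habs : ‖(1 / μ : ℝ)‖ = 1 / μ := abs_of_pos (by positivity)
  have e2 : ‖w - y‖ ^ 2 = (1 / μ) ^ 2 * ‖Δ‖ ^ 2 := by
    rw [hwy, norm_neg, norm_smul, habs]; ring
  have hwx : w - x = (y - x) - (1 / μ) • Δ := by rw [hw]; abel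
  have e3 : ⟪g x, w - x⟫ = ⟪g x, y - x⟫ - 1 / μ * ⟪g x, Δ⟫ := by
    rw [hwx, inner_sub_right, real_inner_smul_right]
  have e4 : ⟪g y, Δ⟫ - ⟪g x, Δ⟫ = ‖Δ‖ ^ 2 := by
    rw [← inner_sub_left, ← hΔ, real_inner_self_eq_norm_sq]
  have e5 : μ / 2 * ((1 / μ) ^ 2 * ‖Δ‖ ^ 2) = 1 / (2 * μ) * ‖Δ‖ ^ 2 := by
    field_simp
  have e6 : 1 / μ * ‖Δ‖ ^ 2 = 2 * (1 / (2 * μ) * ‖Δ‖ ^ 2) := by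
    field_simp
  have e7 : 1 / μ * ⟪g y, Δ⟫ - 1 / μ * ⟪g x, Δ⟫ = 1 / μ * ‖Δ‖ ^ 2 := by
    rw [← mul_sub, e4]
  rw [e1, e2] at h1
  rw [e3] at h2
  linarith [h1, h2, e5, e6, e7]

lemma cocoercive {μ : ℝ} (hμ : 0 < μ) (hconv : ConvexOn ℝ Set.univ f)
    (hg : ∀ x, HasGradientAt f (g x) x)
    (hsmooth : ∀ u v, ‖g v - g u‖ ≤ μ * ‖v - u‖) (x y : EuclR N) :
    1 / μ * ‖g y - g x‖ ^ 2 ≤ ⟪g y - g x, y - x⟫ := by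
  have h1 := grad_lower hμ hconv hg hsmooth x y
  have h2 := grad_lower hμ hconv hg hsmooth y x
  have e0 : ‖g x - g y‖ = ‖g y - g x‖ := norm_sub_rev _ _
  rw [e0] at h2
  have e1 : ⟪g x, y - x⟫ + ⟪g y, x - y⟫ = -⟪g y - g x, y - x⟫ := by
    have : (x - y : EuclR N) = -(y - x) := by abel
    rw [this, inner_neg_right, inner_sub_left]; ring
  have e2 : 1 / μ * ‖g y - g x‖ ^ 2 = 2 * (1 / (2 * μ) * ‖g y - g x‖ ^ 2) := by
    field_simp
  linarith

lemma grad_mem_fdom (hconv : ConvexOn ℝ Set.univ f) (hg : ∀ x, HasGradientAt f (g x) x)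
    (p : EuclR N) : g p ∈ fdom f := by
  have hub : ∀ w : EuclR N, ((⟪w, g p⟫ - f w : ℝ) : EReal) ≤ ((⟪p, g p⟫ - f p : ℝ) : EReal) := by
    intro w
    rw [EReal.coe_le_coe_iff]
    have h1 := grad_ineq hconv hg p w
    have h2 : ⟪g p, w - p⟫ = ⟪g p, w⟫ - ⟪g p, p⟫ := inner_sub_right _ _ _
    have h3 : ⟪w, g p⟫ = ⟪g p, w⟫ := real_inner_comm _ _
    have h4 : ⟪p, g p⟫ = ⟪g p, p⟫ := real_inner_comm _ _
    linarith
  have hle : fconj f (g p) ≤ ((⟪p, g p⟫ - f p : ℝ) : EReal) := iSup_le hub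
  exact ne_top_of_le_ne_top (EReal.coe_ne_top _) hle

end Conv

section GradComp

lemma hasGradComp {k l : ℕ} {f : EuclR k → ℝ} {g : EuclR k → EuclR k}
    (hg : ∀ x, HasGradientAt f (g x) x)
    (M : Matrix (Fin k) (Fin l) ℝ) (x : EuclR l) :
    HasGradientAt (fun x => f (matVec M x)) (matVec Mᵀ (g (matVec M x))) x := by
  have hM : HasFDerivAt (fun x : EuclR l => matVec M x) (matCLM M) x :=
    (matCLM M).hasFDerivAt
  have hcomp := ((hg (matVec M x)).hasFDerivAt).comp x hM
  have heq : (InnerProductSpace.toDual ℝ (EuclR k) (g (matVec M x))).comp (matCLM M)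
      = InnerProductSpace.toDual ℝ (EuclR l) (matVec Mᵀ (g (matVec M x))) := by
    ext v
    simp only [ContinuousLinearMap.comp_apply, InnerProductSpace.toDual_apply_apply, matCLM_apply]
    rw [matVec_adjoint]
  rw [heq] at hcomp
  simpa [Function.comp_def] using hcomp.hasGradientAt

lemma hasGradSq {r l : ℕ} (lam : ℝ) (P : Matrix (Fin r) (Fin l) ℝ) (x : EuclR l) :
    HasGradientAt (fun x : EuclR l => lam / 2 * ‖matVec P x‖ ^ 2)
      (lam • matVec Pᵀ (matVec P x)) x := by
  have hM : HasFDerivAt (fun x : EuclR l => matVec P x) (matCLM P) x :=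
    (matCLM P).hasFDerivAt
  have h1 := hM.norm_sq
  have h2 := h1.const_mul (lam / 2)
  have heq : ((lam / 2) • (2 • (innerSL ℝ (matVec P x)).comp (matCLM P)))
      = InnerProductSpace.toDual ℝ (EuclR l) (lam • matVec Pᵀ (matVec P x)) := by
    ext v
    simp only [ContinuousLinearMap.smul_apply, ContinuousLinearMap.comp_apply,
      InnerProductSpace.toDual_apply_apply, innerSL_apply_apply, matCLM_apply]
    rw [inner_smul_left, ← matVec_adjoint]
    simp
    ring
  rw [heq] at h2
  simpa using h2.hasGradientAt

lemma kkt_zero {k l r : ℕ} {f : EuclR k → ℝ} {g : EuclR k → EuclR k}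
    (hg : ∀ x, HasGradientAt f (g x) x) (lam : ℝ)
    (M : Matrix (Fin k) (Fin l) ℝ) (P : Matrix (Fin r) (Fin l) ℝ) (x₀ : EuclR l)
    (hmin : ∀ x, f (matVec M x₀) + lam / 2 * ‖matVec P x₀‖ ^ 2
        ≤ f (matVec M x) + lam / 2 * ‖matVec P x‖ ^ 2) :
    matVec Mᵀ (g (matVec M x₀)) + lam • matVec Pᵀ (matVec P x₀) = 0 := by
  have h1 := (hasGradComp hg M x₀).hasFDerivAt
  have h2 := (hasGradSq lam P x₀).hasFDerivAt
  have hF := h1.add h2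
  have heq : (InnerProductSpace.toDual ℝ (EuclR l)) (matVec Mᵀ (g (matVec M x₀)))
      + (InnerProductSpace.toDual ℝ (EuclR l)) (lam • matVec Pᵀ (matVec P x₀))
      = (InnerProductSpace.toDual ℝ (EuclR l))
        (matVec Mᵀ (g (matVec M x₀)) + lam • matVec Pᵀ (matVec P x₀)) :=
    (map_add _ _ _).symm
  rw [heq] at hF
  have hloc : IsLocalMin (fun x => f (matVec M x) + lam / 2 * ‖matVec P x‖ ^ 2) x₀ :=
    Filter.Eventually.of_forall hmin
  have h0 := hloc.hasFDerivAt_eq_zero hF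
  have := congrArg (InnerProductSpace.toDual ℝ (EuclR l)).symm h0
  simpa using this

end GradComp

section Proj

lemma projOn_add {p : ℕ} (K : Submodule ℝ (EuclR p)) (x y : EuclR p) :
    projOn K (x + y) = projOn K x + projOn K y := by
  simp [projOn, map_add]

lemma projOn_smul {p : ℕ} (K : Submodule ℝ (EuclR p)) (c : ℝ) (x : EuclR p) :
    projOn K (c • x) = c • projOn K x := by
  simp [projOn, _root_.map_smul]

lemma projOn_sub {p : ℕ} (K : Submodule ℝ (EuclR p)) (x y : EuclR p) :
    projOn K (x - y) = projOn K x - projOn K y := by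
  simp [projOn, map_sub]

lemma projOn_mem {p : ℕ} (K : Submodule ℝ (EuclR p)) (x : EuclR p) : projOn K x ∈ K :=
  SetLike.coe_mem _

lemma projOn_of_mem {p : ℕ} (K : Submodule ℝ (EuclR p)) {x : EuclR p} (hx : x ∈ K) :
    projOn K x = x := by
  exact K.starProjection_eq_self_iff.2 hx

lemma projOn_of_mem_orth {p : ℕ} (K : Submodule ℝ (EuclR p)) {x : EuclR p} (hx : x ∈ Kᗮ) :
    projOn K x = 0 := by
  simp [projOn, Submodule.orthogonalProjectionOnto_apply_of_mem_orthogonal hx]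

lemma sub_projOn_mem_orth {p : ℕ} (K : Submodule ℝ (EuclR p)) (x : EuclR p) :
    x - projOn K x ∈ Kᗮ :=
  K.sub_starProjection_mem_orthogonal x

lemma norm_sub_projOn_le {p : ℕ} (K : Submodule ℝ (EuclR p)) (x : EuclR p) :
    ‖x - projOn K x‖ ≤ ‖x‖ := by
  have hmem := sub_projOn_mem_orth K x
  have h0 : ⟪projOn K x, x - projOn K x⟫ = 0 :=
    (Submodule.mem_orthogonal K _).1 hmem _ (projOn_mem K x)
  have h1 : ‖x - projOn K x‖ ^ 2 = ⟪x - projOn K x, x⟫ := by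
    have e : ⟪x - projOn K x, x⟫ = ⟪x - projOn K x, x - projOn K x⟫
        + ⟪x - projOn K x, projOn K x⟫ := by
      rw [← inner_add_right]
      congr 1
      abel
    have h0' : ⟪x - projOn K x, projOn K x⟫ = 0 := by
      rw [real_inner_comm]; exact h0
    rw [e, h0', add_zero, real_inner_self_eq_norm_sq]
  have h2 : ⟪x - projOn K x, x⟫ ≤ ‖x - projOn K x‖ * ‖x‖ := real_inner_le_norm _ _
  by_cases h : ‖x - projOn K x‖ = 0
  · rw [h]; exact norm_nonneg x
  · have hpos : 0 < ‖x - projOn K x‖ := lt_of_le_of_ne (norm_nonneg _) (Ne.symm h)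
    nlinarith [h1, h2]

end Proj

section Zf

lemma Zf_bddAbove {n d m : ℕ} (f : EuclR n → ℝ) (zs : EuclR n)
    (A : Matrix (Fin n) (Fin d) ℝ) (S : Matrix (Fin d) (Fin m) ℝ) :
    BddAbove ((fun Δ => ‖matVec Aᵀ Δ - projOn (ranM S) (matVec Aᵀ Δ)‖) ''
      (tcone f zs ∩ Metric.closedBall 0 1)) := by
  refine ⟨‖matCLM (Aᵀ)‖, ?_⟩
  rintro a ⟨Δ, ⟨_, hball⟩, rfl⟩
  have h1 : ‖matVec Aᵀ Δ - projOn (ranM S) (matVec Aᵀ Δ)‖ ≤ ‖matVec Aᵀ Δ‖ :=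
    norm_sub_projOn_le _ _
  have h3 : ‖matVec Aᵀ Δ‖ ≤ ‖matCLM (Aᵀ)‖ * ‖Δ‖ := (matCLM (Aᵀ)).le_opNorm Δ
  have h4 : ‖Δ‖ ≤ 1 := by
    simpa [Metric.mem_closedBall, dist_zero_right] using hball
  have h5 : ‖matCLM (Aᵀ)‖ * ‖Δ‖ ≤ ‖matCLM (Aᵀ)‖ :=
    mul_le_of_le_one_right (norm_nonneg _) h4
  simp only
  linarith

lemma Zf_nonneg {n d m : ℕ} (f : EuclR n → ℝ) (zs : EuclR n)
    (A : Matrix (Fin n) (Fin d) ℝ) (S : Matrix (Fin d) (Fin m) ℝ)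
    (hdom : zs ∈ fdom f) : 0 ≤ ZfVal f zs A S := by
  have h0 : (0 : EuclR n) ∈ tcone f zs ∩ Metric.closedBall 0 1 := by
    refine ⟨⟨0, le_refl 0, zs, hdom, by simp⟩, by simp⟩
  have hmem : (0:ℝ) ∈ ((fun Δ => ‖matVec Aᵀ Δ - projOn (ranM S) (matVec Aᵀ Δ)‖) ''
      (tcone f zs ∩ Metric.closedBall 0 1)) := by
    refine ⟨0, h0, ?_⟩
    simp [matVec, projOn]
  exact le_csSup (Zf_bddAbove f zs A S) hmem

lemma Zf_bound {n d m : ℕ} (f : EuclR n → ℝ) (zs : EuclR n)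
    (A : Matrix (Fin n) (Fin d) ℝ) (S : Matrix (Fin d) (Fin m) ℝ)
    {y : EuclR n} (hy : y ∈ fdom f) :
    ‖matVec Aᵀ (y - zs) - projOn (ranM S) (matVec Aᵀ (y - zs))‖
      ≤ ZfVal f zs A S * ‖y - zs‖ := by
  by_cases h : y - zs = 0
  · rw [h]
    simp [matVec, projOn]
  · have hc : 0 < ‖y - zs‖ := norm_pos_iff.2 h
    set c : ℝ := ‖y - zs‖⁻¹ with hcdef
    have hc0 : 0 < c := inv_pos.2 hc
    have hmem : c • (y - zs) ∈ tcone f zs ∩ Metric.closedBall 0 1 := by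
      constructor
      · exact ⟨c, hc0.le, y, hy, rfl⟩
      · simp only [Metric.mem_closedBall, dist_zero_right, norm_smul]
        rw [hcdef, norm_inv, norm_norm]
        rw [inv_mul_cancel₀ hc.ne']
    have himg : c * ‖matVec Aᵀ (y - zs) - projOn (ranM S) (matVec Aᵀ (y - zs))‖
        ∈ ((fun Δ => ‖matVec Aᵀ Δ - projOn (ranM S) (matVec Aᵀ Δ)‖) ''
          (tcone f zs ∩ Metric.closedBall 0 1)) := by
      refine ⟨c • (y - zs), hmem, ?_⟩
      have e1 : matVec Aᵀ (c • (y - zs)) = c • matVec Aᵀ (y - zs) := matVec_smul _ _ _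
      simp only
      rw [e1, projOn_smul, ← smul_sub, norm_smul, Real.norm_eq_abs, abs_of_pos hc0]
    have hle := le_csSup (Zf_bddAbove f zs A S) himg
    calc ‖matVec Aᵀ (y - zs) - projOn (ranM S) (matVec Aᵀ (y - zs))‖
        = ‖y - zs‖ * (c * ‖matVec Aᵀ (y - zs) - projOn (ranM S) (matVec Aᵀ (y - zs))‖) := by
          rw [hcdef]; field_simp
      _ ≤ ‖y - zs‖ * ZfVal f zs A S := mul_le_mul_of_nonneg_left hle hc.le
      _ = ZfVal f zs A S * ‖y - zs‖ := mul_comm _ _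

end Zf

lemma final_arith (μ lam Z mmv s su nq x1n : ℝ)
    (hμ : 0 < μ) (hlam : 0 < lam) (hZ0 : 0 ≤ Z) (hm0 : 0 ≤ mmv) (hs0 : 0 ≤ s)
    (hnq : 0 ≤ nq) (hx1n0 : 0 ≤ x1n)
    (hcond : 2 * μ * Z ^ 2 ≤ lam)
    (hkey : 1 / μ * s ^ 2 ≤ -(lam * su ^ 2) + Z * s * mmv)
    (hqb : nq ≤ Z * s)
    (hx1sq : x1n ^ 2 = (1 / lam) ^ 2 * ((lam * su) ^ 2 + nq ^ 2)) :
    x1n ≤ Real.sqrt (μ / (2 * lam)) * (Z * mmv) := by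
  have hq2 : nq ^ 2 ≤ Z ^ 2 * s ^ 2 := by nlinarith
  have hkeymul : s ^ 2 ≤ μ * Z * s * mmv - μ * lam * su ^ 2 := by
    have h := mul_le_mul_of_nonneg_left hkey hμ.le
    have e : μ * (1 / μ * s ^ 2) = s ^ 2 := by field_simp
    nlinarith [h, e]
  have hfinal2 : x1n ^ 2 ≤ μ / (2 * lam) * (Z * mmv) ^ 2 := by
    have hmul : ((1 / lam) ^ 2 * ((lam * su) ^ 2 + nq ^ 2)) * (μ * lam ^ 2)
        ≤ (μ / (2 * lam) * (Z * mmv) ^ 2) * (μ * lam ^ 2) := by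
      have eL : ((1 / lam) ^ 2 * ((lam * su) ^ 2 + nq ^ 2)) * (μ * lam ^ 2)
          = μ * lam ^ 2 * su ^ 2 + μ * nq ^ 2 := by
        field_simp
      have eR : (μ / (2 * lam) * (Z * mmv) ^ 2) * (μ * lam ^ 2)
          = μ ^ 2 * lam * (Z * mmv) ^ 2 / 2 := by
        field_simp
      rw [eL, eR]
      nlinarith [mul_le_mul_of_nonneg_left hkeymul hlam.le, hq2,
        mul_nonneg hlam.le (sq_nonneg (s - μ * Z * mmv)),
        mul_nonneg (mul_nonneg (sub_nonneg.2 hcond) hs0) hs0, hμ.le, hμ]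
    have h := le_of_mul_le_mul_right hmul (by positivity : (0:ℝ) < μ * lam ^ 2)
    rw [hx1sq]
    exact h
  have h1 : x1n = Real.sqrt (x1n ^ 2) := (Real.sqrt_sq hx1n0).symm
  have h2 : Real.sqrt (x1n ^ 2) ≤ Real.sqrt (μ / (2 * lam) * (Z * mmv) ^ 2) :=
    Real.sqrt_le_sqrt hfinal2
  have h3 : Real.sqrt (μ / (2 * lam) * (Z * mmv) ^ 2)
      = Real.sqrt (μ / (2 * lam)) * (Z * mmv) := by
    rw [Real.sqrt_mul (by positivity), Real.sqrt_sq (by positivity : (0:ℝ) ≤ Z * mmv)]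
  rw [h1, ← h3]
  exact h2

/-- recovery error of the first-order estimator (Theorem 1 of the paper). -/
theorem first_order_recovery (n d m : ℕ) (f : EuclR n → ℝ) (μ lam : ℝ)
    (hμ : 0 < μ) (hlam : 0 < lam)
    (hconv : ConvexOn ℝ Set.univ f)
    (hdiff : ∀ x, HasGradientAt f (gradient f x) x)
    (hsmooth : ∀ x y, ‖gradient f y - gradient f x‖ ≤ μ * ‖y - x‖)
    (A : Matrix (Fin n) (Fin d) ℝ) (S : Matrix (Fin d) (Fin m) ℝ)
    (xs : EuclR d) (hxs0 : xs ≠ 0)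
    (hxs : ∀ x, f (matVec A xs) + lam / 2 * ‖xs‖ ^ 2 ≤ f (matVec A x) + lam / 2 * ‖x‖ ^ 2)
    (zs : EuclR n) (hzs : zs = gradient f (matVec A xs))
    (αs : EuclR m)
    (hαs : ∀ α, f (matVec (A * S) αs) + lam / 2 * ‖matVec S αs‖ ^ 2
        ≤ f (matVec (A * S) α) + lam / 2 * ‖matVec S α‖ ^ 2)
    (x0 x1 : EuclR d)
    (hx0 : x0 = matVec S αs)
    (hx1 : x1 = (-(1 / lam)) • matVec Aᵀ (gradient f (matVec (A * S) αs)))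
    (hcond : 2 * μ * (ZfVal f zs A S) ^ 2 ≤ lam) :
    ‖x1 - xs‖ / ‖xs‖
      ≤ Real.sqrt (μ / (2 * lam)) * ZfVal f zs A S * min 1 (‖x0 - xs‖ / ‖xs‖) := by
  classical
  set g : EuclR n → EuclR n := gradient f with hgdef
  set ys : EuclR n := g (matVec (A * S) αs) with hys
  set K : Submodule ℝ (EuclR d) := ranM S with hK
  set Z : ℝ := ZfVal f zs A S with hZ
  set mm : ℝ := min ‖xs‖ ‖x0 - xs‖ with hmm
  -- KKT for the original problem
  have hK1 : matVec Aᵀ zs + lam • xs = 0 := by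
    have hxs' : ∀ x, f (matVec A xs) + lam / 2 * ‖matVec (1 : Matrix (Fin d) (Fin d) ℝ) xs‖ ^ 2
        ≤ f (matVec A x) + lam / 2 * ‖matVec (1 : Matrix (Fin d) (Fin d) ℝ) x‖ ^ 2 := by
      intro x; simpa [matVec_one] using hxs x
    have := kkt_zero hdiff lam A (1 : Matrix (Fin d) (Fin d) ℝ) xs hxs'
    simpa [matVec_one, Matrix.transpose_one, ← hzs] using this
  -- KKT for the sketched problem
  have hK2 : matVec Sᵀ (matVec Aᵀ ys + lam • x0) = 0 := by
    have := kkt_zero hdiff lam (A * S) S αs hαs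
    rw [Matrix.transpose_mul, matVec_mul] at this
    rw [matVec_add, matVec_smul, hx0]
    simpa [hys, hgdef] using this
  -- w ∈ Kᗮ
  set w : EuclR d := matVec Aᵀ ys + lam • x0 with hw
  have hwK : w ∈ Kᗮ := by
    rw [Submodule.mem_orthogonal]
    rintro u ⟨v, rfl⟩
    have h1 : ⟪matVec Sᵀ w, v⟫ = ⟪w, matVec S v⟫ := matVec_adjoint S w v
    rw [hK2] at h1
    simp only [inner_zero_left] at h1
    rw [real_inner_comm]
    exact h1.symm ▸ rfl
  have hx0K : x0 ∈ K := by rw [hx0]; exact ⟨αs, rfl⟩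
  -- cocoercivity
  set Δ : EuclR n := ys - zs with hΔ
  set aT : EuclR d := matVec Aᵀ Δ with haT
  have hco : 1 / μ * ‖Δ‖ ^ 2 ≤ ⟪aT, x0 - xs⟫ := by
    have h := cocoercive hμ hconv hdiff (fun u v => hsmooth u v) (matVec A xs) (matVec (A * S) αs)
    have e1 : matVec (A * S) αs - matVec A xs = matVec A (x0 - xs) := by
      rw [matVec_sub, matVec_mul, hx0]
    rw [e1, ← hzs] at h
    have e2 : ⟪Δ, matVec A (x0 - xs)⟫ = ⟪aT, x0 - xs⟫ := (matVec_adjoint A Δ (x0 - xs)).symm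
    rw [← e2]
    exact h
  -- decomposition
  set p : EuclR d := projOn K aT with hp
  set q : EuclR d := aT - p with hq
  set u : EuclR d := x0 - projOn K xs with hu
  have haT2 : aT = w - lam • x0 + lam • xs := by
    have h1 : matVec Aᵀ zs = -(lam • xs) := by
      have := hK1; linear_combination (norm := module) this
    rw [haT, hΔ, matVec_sub, h1, hw]
    abel
  have hpK : p ∈ K := projOn_mem K aT
  have hpval : p = -(lam • u) := by
    rw [hp, haT2, projOn_add, projOn_sub, projOn_smul, projOn_smul,
      projOn_of_mem_orth K hwK, projOn_of_mem K hx0K, hu]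
    rw [smul_sub]
    abel
  have huK : u ∈ K := K.sub_mem hx0K (projOn_mem K xs)
  have hqO : q ∈ Kᗮ := by
    rw [hq, hp]
    exact sub_projOn_mem_orth K aT
  have hsplit : x0 - xs = u + (projOn K xs - xs) := by rw [hu]; abel
  have hPxsO : projOn K xs - xs ∈ Kᗮ := by
    have h1 := sub_projOn_mem_orth K xs
    have h2 : -(xs - projOn K xs) = projOn K xs - xs := by abel
    rw [← h2]
    exact Submodule.neg_mem _ h1
  have hip : ⟪p, x0 - xs⟫ = -(lam * ‖u‖ ^ 2) := by
    rw [hpval, hsplit, inner_neg_left, inner_add_right]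
    have h1 : ⟪lam • u, projOn K xs - xs⟫ = 0 := by
      have hmem : lam • u ∈ K := K.smul_mem _ huK
      exact (Submodule.mem_orthogonal K _).1 hPxsO _ hmem
    rw [h1, add_zero, real_inner_smul_left, real_inner_self_eq_norm_sq]
  -- bounds on q and Z
  have hzsdom : zs ∈ fdom f := by
    rw [hzs]
    exact grad_mem_fdom hconv hdiff (matVec A xs)
  have hZ0 : 0 ≤ Z := Zf_nonneg f zs A S hzsdom
  have hq_bound : ‖q‖ ≤ Z * ‖Δ‖ := by
    have hysdom : ys ∈ fdom f := grad_mem_fdom hconv hdiff _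
    have h := Zf_bound f zs A S hysdom
    exact h
  have hm0 : 0 ≤ mm := le_min (norm_nonneg _) (norm_nonneg _)
  have hiq : ⟪q, x0 - xs⟫ ≤ Z * ‖Δ‖ * mm := by
    rw [hsplit, inner_add_right]
    have h1 : ⟪q, u⟫ = 0 := by
      rw [real_inner_comm]
      exact (Submodule.mem_orthogonal K _).1 hqO _ huK
    have h2 : ⟪q, projOn K xs - xs⟫ ≤ ‖q‖ * ‖projOn K xs - xs‖ := real_inner_le_norm _ _
    have hm1 : ‖projOn K xs - xs‖ ≤ ‖xs‖ := by
      rw [norm_sub_rev]; exact norm_sub_projOn_le K xs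
    have hm2 : ‖projOn K xs - xs‖ ≤ ‖x0 - xs‖ := by
      have e : (x0 - xs) - projOn K (x0 - xs) = projOn K xs - xs := by
        rw [projOn_sub, projOn_of_mem K hx0K]; abel
      have h := norm_sub_projOn_le K (x0 - xs)
      rw [e] at h
      exact h
    have hmle : ‖projOn K xs - xs‖ ≤ mm := le_min hm1 hm2
    have h3 : ‖q‖ * ‖projOn K xs - xs‖ ≤ (Z * ‖Δ‖) * mm :=
      mul_le_mul hq_bound hmle (norm_nonneg _) (by positivity)
    linarith
  have haTpq : aT = p + q := by rw [hq]; abel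
  have hkey : 1 / μ * ‖Δ‖ ^ 2 ≤ -(lam * ‖u‖ ^ 2) + Z * ‖Δ‖ * mm := by
    have h : ⟪aT, x0 - xs⟫ = ⟪p, x0 - xs⟫ + ⟪q, x0 - xs⟫ := by
      rw [haTpq, inner_add_left]
    linarith [hco, hip, hiq, h ▸ hco]
  -- x1 - xs
  have hx1e : x1 - xs = (-(1 / lam)) • aT := by
    have h1 : matVec Aᵀ ys = aT + matVec Aᵀ zs := by
      rw [haT, hΔ, matVec_sub]; abel
    have h2 : matVec Aᵀ zs = -(lam • xs) := by
      linear_combination (norm := module) hK1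
    have h3 : (-(1 / lam)) • (-(lam • xs)) = xs := by
      rw [smul_neg, neg_smul, neg_neg, smul_smul, one_div, inv_mul_cancel₀ hlam.ne', one_smul]
    rw [hx1, h1, h2, smul_add, h3]
    abel
  have hnormx1 : ‖x1 - xs‖ = (1 / lam) * ‖aT‖ := by
    rw [hx1e, norm_smul, Real.norm_eq_abs, abs_neg, abs_of_pos (by positivity)]
  have hpq0 : ⟪p, q⟫ = 0 := (Submodule.mem_orthogonal K _).1 hqO _ hpK
  have haTnorm : ‖aT‖ ^ 2 = (lam * ‖u‖) ^ 2 + ‖q‖ ^ 2 := by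
    have hpn : ‖p‖ = lam * ‖u‖ := by
      rw [hpval, norm_neg, norm_smul, Real.norm_eq_abs, abs_of_pos hlam]
    rw [haTpq, norm_add_sq_real, hpq0, hpn]
    ring
  have hx1sq : ‖x1 - xs‖ ^ 2 = (1 / lam) ^ 2 * ((lam * ‖u‖) ^ 2 + ‖q‖ ^ 2) := by
    rw [hnormx1, mul_pow, haTnorm]
  have hmain : ‖x1 - xs‖ ≤ Real.sqrt (μ / (2 * lam)) * (Z * mm) :=
    final_arith μ lam Z mm ‖Δ‖ ‖u‖ ‖q‖ ‖x1 - xs‖ hμ hlam hZ0 hm0 (norm_nonneg _)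
      (norm_nonneg _) (norm_nonneg _) hcond hkey hq_bound hx1sq
  have hxsn : 0 < ‖xs‖ := norm_pos_iff.2 hxs0
  have hminrw : min 1 (‖x0 - xs‖ / ‖xs‖) = mm / ‖xs‖ := by
    rw [hmm]
    nth_rewrite 1 [show (1:ℝ) = ‖xs‖ / ‖xs‖ from (div_self hxsn.ne').symm]
    rw [min_div_div_right hxsn.le]
  rw [hminrw, ← mul_div_assoc]
  have hmain' : ‖x1 - xs‖ ≤ Real.sqrt (μ / (2 * lam)) * Z * mm := by
    rw [mul_assoc]; exact hmain
  exact div_le_div_of_nonneg_right hmain' hxsn.le
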